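/- Let S ∈ (Σ∪{⊥})^n (with ⊥ treated as an ordinary extra alphabet symbol throughout), let π ≥ 1, and suppose there are at most K indices x ∈ [1, n−π] with S[x] ≠ S[x+π]. Let W be a set of at most k positions in [1,n]. Then the set of characters {S[w − bπ] : w ∈ W, b ≥ 0 an integer, 1 ≤ w − bπ ≤ n} has at most k·(K+1) distinct elements. (Consequently, when all candidate wildcard-periods in a range form an arithmetic progression with common difference π, the number of possible assignments to the wildcard characters across all candidates is at most k·(K+1).) -/

import Mathlib

open scoped Classical

lemma image_range_card_le' {β : Type*} [DecidableEq β] (f : ℕ → β) (m : ℕ) :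
    ((Finset.range (m + 1)).image f).card ≤
      1 + ((Finset.range m).filter (fun b => f b ≠ f (b + 1))).card := by
  induction m with
  | zero => simp
  | succ m ih =>
    rw [Finset.range_add_one, Finset.image_insert]
    by_cases hf : f (m + 1) = f m
    · have hmem : f (m + 1) ∈ (Finset.range (m + 1)).image f := by
        rw [hf]; exact Finset.mem_image_of_mem f (by simp)
      rw [Finset.insert_eq_self.2 hmem]
      refine ih.trans ?_
      exact Nat.add_le_add_left (Finset.card_le_card
        (Finset.filter_subset_filter _ (Finset.range_subset_range.2 (Nat.le_succ m)))) 1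
    · have h2 : ((Finset.range (m + 1)).filter (fun b => f b ≠ f (b + 1))) =
          insert m ((Finset.range m).filter (fun b => f b ≠ f (b + 1))) := by
        rw [Finset.range_add_one, Finset.filter_insert, if_pos (fun hc => hf hc.symm)]
      have h3 := Finset.card_insert_le (f (m + 1)) ((Finset.range (m + 1)).image f)
      have h4 : (insert m ((Finset.range m).filter (fun b => f b ≠ f (b + 1)))).card
          = ((Finset.range m).filter (fun b => f b ≠ f (b + 1))).card + 1 :=
        Finset.card_insert_of_notMem (by simp)
      rw [h2, h4]
      omega

lemma per_w {α : Type*} (n π K : ℕ) (hπ : 1 ≤ π) (S : ℕ → Option α)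
    (h : ((Finset.range (n - π)).filter (fun x => S x ≠ S (x + π))).card ≤ K)
    (w : ℕ) (hw : w < n) :
    (((Finset.range (w + 1)).filter (fun b => b * π ≤ w)).image
      (fun b => S (w - b * π))).card ≤ K + 1 := by
  have hset : (Finset.range (w + 1)).filter (fun b => b * π ≤ w)
      = Finset.range (w / π + 1) := by
    ext b
    simp only [Finset.mem_filter, Finset.mem_range, Nat.lt_succ_iff,
      Nat.le_div_iff_mul_le hπ]
    constructor
    · exact fun hb => hb.2
    · exact fun hb => ⟨le_trans (Nat.le_mul_of_pos_right b hπ) hb, hb⟩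
  rw [hset]
  refine (image_range_card_le' (fun b => S (w - b * π)) (w / π)).trans ?_
  have hK : ((Finset.range (w / π)).filter
      (fun b => S (w - b * π) ≠ S (w - (b + 1) * π))).card ≤ K := by
    refine le_trans (Finset.card_le_card_of_injOn (fun b => w - (b + 1) * π) ?_ ?_) h
    · intro b hb
      simp only [Finset.mem_coe, Finset.mem_filter, Finset.mem_range] at hb ⊢
      obtain ⟨hb1, hb2⟩ := hb
      have hle : (b + 1) * π ≤ w := by
        rw [← Nat.le_div_iff_mul_le hπ]; omega
      have hmul : (b + 1) * π = b * π + π := by ring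
      have hadd : w - (b + 1) * π + π = w - b * π := by omega
      refine ⟨by omega, ?_⟩
      rw [hadd]
      exact fun hc => hb2 hc.symm
    · intro a ha b hb hab
      have hab' : w - (a + 1) * π = w - (b + 1) * π := hab
      simp only [Finset.coe_filter, Set.mem_setOf_eq, Finset.mem_range] at ha hb
      have ha' : (a + 1) * π ≤ w := by rw [← Nat.le_div_iff_mul_le hπ]; omega
      have hb' : (b + 1) * π ≤ w := by rw [← Nat.le_div_iff_mul_le hπ]; omega
      have heq : (a + 1) * π = (b + 1) * π := by omega
      have := Nat.eq_of_mul_eq_mul_right hπ heq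
      omega
  omega

/-- Let `S ∈ (Σ ∪ {⊥})^n` (wildcard `⊥` encoded as `none`, treated as
an ordinary extra symbol), `π ≥ 1`, and suppose there are at most `K` indices
`x ∈ [0, n-π)` with `S x ≠ S (x+π)`. Let `W` be a set of at most `k` positions in
`[0, n)`. Then the set of characters `{S (w - bπ) : w ∈ W, b ≥ 0, bπ ≤ w}` has at
most `k * (K + 1)` distinct elements. -/
theorem stmt7 {α : Type*} (n π K k : ℕ) (hπ : 1 ≤ π) (S : ℕ → Option α)
    (h : ((Finset.range (n - π)).filter (fun x => S x ≠ S (x + π))).card ≤ K)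
    (W : Finset ℕ) (hWn : ∀ w ∈ W, w < n) (hWk : W.card ≤ k) :
    (W.biUnion (fun w => ((Finset.range (w + 1)).filter (fun b => b * π ≤ w)).image
      (fun b => S (w - b * π)))).card ≤ k * (K + 1) := by
  calc (W.biUnion (fun w => ((Finset.range (w + 1)).filter (fun b => b * π ≤ w)).image
      (fun b => S (w - b * π)))).card
      ≤ ∑ w ∈ W, (((Finset.range (w + 1)).filter (fun b => b * π ≤ w)).image
        (fun b => S (w - b * π))).card := Finset.card_biUnion_le
    _ ≤ ∑ _w ∈ W, (K + 1) :=
        Finset.sum_le_sum (fun w hw => per_w n π K hπ S h w (hWn w hw))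
    _ = W.card * (K + 1) := by rw [Finset.sum_const, smul_eq_mul]
    _ ≤ k * (K + 1) := Nat.mul_le_mul_right _ hWk
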